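/- For every L₀ > 0, the quantity Q(L₀) = E[ ( ∫_ℝ v² exp(−(v−ε)²/2) dv ) / ( ∫_{−L₀}^{L₀} exp(−(v−ε)²/2) dv ) ] is finite, where the expectation is over ε ~ N(0,1). -/

import Mathlib

open MeasureTheory ProbabilityTheory Real Set

lemma integrable_exp_neg_mul_abs' {c : ℝ} (hc : 0 < c) :
    Integrable (fun x : ℝ => Real.exp (-c * |x|)) := by
  have h1 : IntegrableOn (fun x : ℝ => Real.exp (-c * |x|)) (Ici 0) := by
    rw [integrableOn_Ici_iff_integrableOn_Ioi]
    refine (exp_neg_integrableOn_Ioi 0 hc).congr_fun ?_ measurableSet_Ioi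
    intro x hx
    simp [abs_of_nonneg (le_of_lt (mem_Ioi.mp hx))]
  have h2 : IntegrableOn (fun x : ℝ => Real.exp (-c * |x|)) (Iic 0) := by
    rw [← (Measure.measurePreserving_neg (volume : Measure ℝ)).integrableOn_comp_preimage
      (Homeomorph.neg ℝ).measurableEmbedding]
    simp only [Function.comp_def, abs_neg, neg_preimage, neg_Iic, neg_zero]
    exact h1
  rw [← integrableOn_univ, ← Set.Iic_union_Ici (a := (0:ℝ))]
  exact h2.union h1

theorem Q_finite (L₀ : ℝ) (hL₀ : 0 < L₀) :
    Integrable (fun ε : ℝ =>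
      (∫ v : ℝ, v ^ 2 * Real.exp (-(v - ε) ^ 2 / 2)) /
        (∫ v in Set.Icc (-L₀) L₀, Real.exp (-(v - ε) ^ 2 / 2)))
      (gaussianReal 0 1) := by
  have I0 : Integrable (fun x : ℝ => Real.exp (-x ^ 2 / 2)) := by
    refine (integrable_exp_neg_mul_sq (by norm_num : (0:ℝ) < 1/2)).congr
      (Filter.Eventually.of_forall fun x => ?_)
    show Real.exp (-(1/2) * x ^ 2) = Real.exp (-x ^ 2 / 2)
    ring_nf
  have I1 : Integrable (fun x : ℝ => x * Real.exp (-x ^ 2 / 2)) := by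
    refine (integrable_mul_exp_neg_mul_sq (by norm_num : (0:ℝ) < 1/2)).congr
      (Filter.Eventually.of_forall fun x => ?_)
    show x * Real.exp (-(1/2) * x ^ 2) = x * Real.exp (-x ^ 2 / 2)
    ring_nf
  have I2 : Integrable (fun x : ℝ => x ^ 2 * Real.exp (-x ^ 2 / 2)) := by
    refine (integrable_rpow_mul_exp_neg_mul_sq (by norm_num : (0:ℝ) < 1/2)
      (by norm_num : (-1:ℝ) < 2)).congr (Filter.Eventually.of_forall fun x => ?_)
    show x ^ (2:ℝ) * Real.exp (-(1/2) * x ^ 2) = x ^ 2 * Real.exp (-x ^ 2 / 2)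
    rw [show ((2:ℝ)) = ((2:ℕ):ℝ) by norm_num, Real.rpow_natCast]
    ring_nf
  set C₀ : ℝ := ∫ x : ℝ, Real.exp (-x ^ 2 / 2) with hC₀
  set C₁ : ℝ := ∫ x : ℝ, x * Real.exp (-x ^ 2 / 2) with hC₁
  set C₂ : ℝ := ∫ x : ℝ, x ^ 2 * Real.exp (-x ^ 2 / 2) with hC₂
  -- the numerator is an explicit quadratic polynomial in ε
  have hnum : ∀ ε : ℝ, (∫ v : ℝ, v ^ 2 * Real.exp (-(v - ε) ^ 2 / 2))
      = C₂ + 2 * ε * C₁ + ε ^ 2 * C₀ := by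
    intro ε
    have ht := integral_add_right_eq_self (μ := (volume : Measure ℝ))
      (fun v : ℝ => v ^ 2 * Real.exp (-(v - ε) ^ 2 / 2)) ε
    rw [← ht]
    have he : ∀ x : ℝ, (x + ε) ^ 2 * Real.exp (-(x + ε - ε) ^ 2 / 2)
        = x ^ 2 * Real.exp (-x ^ 2 / 2) + (2 * ε) * (x * Real.exp (-x ^ 2 / 2))
            + ε ^ 2 * Real.exp (-x ^ 2 / 2) := by
      intro x
      have hx : x + ε - ε = x := by ring
      rw [hx]
      ring
    have J1 : Integrable (fun x : ℝ => x ^ 2 * Real.exp (-x ^ 2 / 2)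
        + 2 * ε * (x * Real.exp (-x ^ 2 / 2))) := I2.add (I1.const_mul (2 * ε))
    have J2 : Integrable (fun x : ℝ => ε ^ 2 * Real.exp (-x ^ 2 / 2)) := I0.const_mul _
    rw [integral_congr_ae (Filter.Eventually.of_forall he), integral_add J1 J2,
      integral_add I2 (I1.const_mul (2 * ε)), integral_const_mul, integral_const_mul]
  -- lower bound for the denominator
  have hden : ∀ ε : ℝ, (L₀/2) * Real.exp (-(ε^2 - L₀*|ε| + L₀^2)/2)
      ≤ ∫ v in Set.Icc (-L₀) L₀, Real.exp (-(v - ε) ^ 2 / 2) := by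
    intro ε
    have hcont : Continuous fun v : ℝ => Real.exp (-(v - ε) ^ 2 / 2) := by fun_prop
    have hInt : IntegrableOn (fun v : ℝ => Real.exp (-(v - ε) ^ 2 / 2)) (Set.Icc (-L₀) L₀) :=
      hcont.integrableOn_Icc
    rcases le_or_gt 0 ε with hε | hε
    · have hsub : Set.Icc (L₀/2) L₀ ⊆ Set.Icc (-L₀) L₀ :=
        Set.Icc_subset_Icc (by linarith) le_rfl
      have step2 : Real.exp (-(ε^2 - L₀*|ε| + L₀^2)/2) * ((volume (Set.Icc (L₀/2) L₀)).toReal)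
          ≤ ∫ v in Set.Icc (L₀/2) L₀, Real.exp (-(v - ε) ^ 2 / 2) := by
        rw [mul_comm, ← smul_eq_mul, ← measureReal_def]
        refine setIntegral_ge_of_const_le measurableSet_Icc (by rw [Real.volume_Icc]; exact ENNReal.ofReal_ne_top) ?_
          (hInt.mono_set hsub)
        intro v hv
        apply Real.exp_le_exp.2
        rw [abs_of_nonneg hε]
        nlinarith [hv.1, hv.2]
      have step1 : ∫ v in Set.Icc (L₀/2) L₀, Real.exp (-(v - ε) ^ 2 / 2)
          ≤ ∫ v in Set.Icc (-L₀) L₀, Real.exp (-(v - ε) ^ 2 / 2) :=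
        setIntegral_mono_set hInt
          (Filter.Eventually.of_forall fun v => (Real.exp_pos _).le)
          (HasSubset.Subset.eventuallyLE hsub)
      have hvol : (volume (Set.Icc (L₀/2) L₀)).toReal = L₀/2 := by
        rw [Real.volume_Icc, ENNReal.toReal_ofReal (by linarith)]
        ring
      calc (L₀/2) * Real.exp (-(ε^2 - L₀*|ε| + L₀^2)/2)
          = Real.exp (-(ε^2 - L₀*|ε| + L₀^2)/2) * ((volume (Set.Icc (L₀/2) L₀)).toReal) := by
            rw [hvol]; ring
        _ ≤ _ := le_trans step2 step1
    · have hsub : Set.Icc (-L₀) (-(L₀/2)) ⊆ Set.Icc (-L₀) L₀ :=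
        Set.Icc_subset_Icc le_rfl (by linarith)
      have step2 : Real.exp (-(ε^2 - L₀*|ε| + L₀^2)/2) * ((volume (Set.Icc (-L₀) (-(L₀/2)))).toReal)
          ≤ ∫ v in Set.Icc (-L₀) (-(L₀/2)), Real.exp (-(v - ε) ^ 2 / 2) := by
        rw [mul_comm, ← smul_eq_mul, ← measureReal_def]
        refine setIntegral_ge_of_const_le measurableSet_Icc (by rw [Real.volume_Icc]; exact ENNReal.ofReal_ne_top) ?_
          (hInt.mono_set hsub)
        intro v hv
        apply Real.exp_le_exp.2
        rw [abs_of_neg hε]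
        nlinarith [hv.1, hv.2]
      have step1 : ∫ v in Set.Icc (-L₀) (-(L₀/2)), Real.exp (-(v - ε) ^ 2 / 2)
          ≤ ∫ v in Set.Icc (-L₀) L₀, Real.exp (-(v - ε) ^ 2 / 2) :=
        setIntegral_mono_set hInt
          (Filter.Eventually.of_forall fun v => (Real.exp_pos _).le)
          (HasSubset.Subset.eventuallyLE hsub)
      have hvol : (volume (Set.Icc (-L₀) (-(L₀/2)))).toReal = L₀/2 := by
        rw [Real.volume_Icc, ENNReal.toReal_ofReal (by linarith)]
        ring
      calc (L₀/2) * Real.exp (-(ε^2 - L₀*|ε| + L₀^2)/2)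
          = Real.exp (-(ε^2 - L₀*|ε| + L₀^2)/2) * ((volume (Set.Icc (-L₀) (-(L₀/2)))).toReal) := by
            rw [hvol]; ring
        _ ≤ _ := le_trans step2 step1
  have hdenpos : ∀ ε : ℝ, 0 < ∫ v in Set.Icc (-L₀) L₀, Real.exp (-(v - ε) ^ 2 / 2) :=
    fun ε => lt_of_lt_of_le (by positivity) (hden ε)
  set K : ℝ := |C₂| + |C₁| + |C₀| with hK
  have hKnn : 0 ≤ K := by positivity
  set g : ℝ → ℝ := fun ε => 2*K/L₀ * ((1+ε^2) * Real.exp ((ε^2 - L₀*|ε| + L₀^2)/2)) with hg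
  -- bound on the quotient
  have hbound : ∀ ε : ℝ, ‖(∫ v : ℝ, v ^ 2 * Real.exp (-(v - ε) ^ 2 / 2)) /
      (∫ v in Set.Icc (-L₀) L₀, Real.exp (-(v - ε) ^ 2 / 2))‖ ≤ g ε := by
    intro ε
    have hD := hden ε
    have hDpos := hdenpos ε
    rw [norm_div, Real.norm_of_nonneg hDpos.le]
    have hNb : ‖∫ v : ℝ, v ^ 2 * Real.exp (-(v - ε) ^ 2 / 2)‖ ≤ K * (1 + ε^2) := by
      rw [hnum ε, Real.norm_eq_abs]
      have h3 := abs_add_three C₂ (2 * ε * C₁) (ε ^ 2 * C₀)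
      have e1 : |2 * ε * C₁| = 2 * |ε| * |C₁| := by
        rw [abs_mul, abs_mul, abs_two]
      have e2 : |ε ^ 2 * C₀| = ε ^ 2 * |C₀| := by
        rw [abs_mul, abs_of_nonneg (sq_nonneg ε)]
      rw [e1, e2] at h3
      have hsq : |ε| ^ 2 = ε ^ 2 := sq_abs ε
      nlinarith [sq_nonneg (1 - |ε|), abs_nonneg C₀, abs_nonneg C₁, abs_nonneg C₂, abs_nonneg ε]
    calc ‖∫ v : ℝ, v ^ 2 * Real.exp (-(v - ε) ^ 2 / 2)‖ /
          (∫ v in Set.Icc (-L₀) L₀, Real.exp (-(v - ε) ^ 2 / 2))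
        ≤ (K * (1 + ε^2)) / ((L₀/2) * Real.exp (-(ε^2 - L₀*|ε| + L₀^2)/2)) :=
          div_le_div₀ (by positivity) hNb (by positivity) hD
      _ = g ε := by
          rw [hg]
          rw [show -(ε^2 - L₀*|ε| + L₀^2)/2 = -((ε^2 - L₀*|ε| + L₀^2)/2) by ring, Real.exp_neg]
          field_simp
  -- g is integrable with respect to the gaussian measure
  have hgInt : Integrable g (gaussianReal 0 1) := by
    rw [gaussianReal_of_var_ne_zero _ one_ne_zero,
      integrable_withDensity_iff (measurable_gaussianPDF _ _)
        (Filter.Eventually.of_forall fun x => ENNReal.ofReal_lt_top)]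
    have hpdf : ∀ x : ℝ, ((gaussianPDF 0 1 x).toReal : ℝ)
        = (Real.sqrt (2*π))⁻¹ * Real.exp (-x^2/2) := by
      intro x
      rw [gaussianPDF, ENNReal.toReal_ofReal (gaussianPDFReal_nonneg _ _ _), gaussianPDFReal]
      norm_num
    -- key pointwise absorption of the polynomial into the exponential
    have key : ∀ x : ℝ, (1 + x^2) * Real.exp (-(L₀/2) * |x|)
        ≤ (L₀^2 + 64)/L₀^2 * Real.exp (-(L₀/4) * |x|) := by
      intro x
      have h1 : L₀^2 * (1 + x^2) ≤ (L₀^2 + 64) * Real.exp (L₀/4 * |x|) := by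
        have ha : (0:ℝ) ≤ L₀/8 * |x| := by positivity
        have hE : L₀/8 * |x| + 1 ≤ Real.exp (L₀/8 * |x|) := Real.add_one_le_exp _
        have hE2 : Real.exp (L₀/4 * |x|) = Real.exp (L₀/8 * |x|) * Real.exp (L₀/8 * |x|) := by
          rw [← Real.exp_add]; congr 1; ring
        rw [hE2]
        have habs : |x| * |x| = x^2 := by rw [← sq_abs]; ring
        nlinarith [mul_le_mul hE hE (by positivity) (Real.exp_pos _).le, abs_nonneg x,
          sq_nonneg (L₀ * |x|)]
      have h1' : 1 + x^2 ≤ (L₀^2 + 64)/L₀^2 * Real.exp (L₀/4 * |x|) := by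
        rw [div_mul_eq_mul_div, le_div_iff₀ (by positivity : (0:ℝ) < L₀^2)]
        nlinarith [h1]
      calc (1 + x^2) * Real.exp (-(L₀/2) * |x|)
          ≤ ((L₀^2 + 64)/L₀^2 * Real.exp (L₀/4 * |x|)) * Real.exp (-(L₀/2) * |x|) :=
            mul_le_mul_of_nonneg_right h1' (Real.exp_pos _).le
        _ = (L₀^2 + 64)/L₀^2 * Real.exp (-(L₀/4) * |x|) := by
            rw [mul_assoc, ← Real.exp_add,
              show L₀/4 * |x| + -(L₀/2) * |x| = -(L₀/4) * |x| by ring]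
    set M : ℝ := (2*K/L₀ * (Real.sqrt (2*π))⁻¹ * Real.exp (L₀^2/2)) * ((L₀^2 + 64)/L₀^2)
      with hM
    refine Integrable.mono' ((integrable_exp_neg_mul_abs' (c := L₀/4) (by positivity)).const_mul M)
      ?_ (Filter.Eventually.of_forall fun x => ?_)
    · have : (fun x : ℝ => g x * ((gaussianPDF 0 1 x).toReal : ℝ))
          = fun x : ℝ => g x * ((Real.sqrt (2*π))⁻¹ * Real.exp (-x^2/2)) := by
        funext x; rw [hpdf]
      rw [this, hg]
      apply Continuous.aestronglyMeasurable
      fun_prop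
    · rw [hpdf, hg]
      have hnn : (0:ℝ) ≤ 2*K/L₀ * ((1+x^2) * Real.exp ((x^2 - L₀*|x| + L₀^2)/2))
          * ((Real.sqrt (2*π))⁻¹ * Real.exp (-x^2/2)) := by positivity
      rw [Real.norm_of_nonneg hnn]
      have hsplit : Real.exp ((x^2 - L₀*|x| + L₀^2)/2) * Real.exp (-x^2/2)
          = Real.exp (L₀^2/2) * Real.exp (-(L₀/2) * |x|) := by
        rw [← Real.exp_add, ← Real.exp_add]; congr 1; ring
      calc 2*K/L₀ * ((1+x^2) * Real.exp ((x^2 - L₀*|x| + L₀^2)/2))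
            * ((Real.sqrt (2*π))⁻¹ * Real.exp (-x^2/2))
          = (2*K/L₀ * (Real.sqrt (2*π))⁻¹) * ((1+x^2)
              * (Real.exp ((x^2 - L₀*|x| + L₀^2)/2) * Real.exp (-x^2/2))) := by ring
        _ = (2*K/L₀ * (Real.sqrt (2*π))⁻¹ * Real.exp (L₀^2/2))
              * ((1+x^2) * Real.exp (-(L₀/2) * |x|)) := by rw [hsplit]; ring
        _ ≤ (2*K/L₀ * (Real.sqrt (2*π))⁻¹ * Real.exp (L₀^2/2))
              * ((L₀^2 + 64)/L₀^2 * Real.exp (-(L₀/4) * |x|)) := by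
            apply mul_le_mul_of_nonneg_left (key x)
            positivity
        _ = M * Real.exp (-(L₀/4) * |x|) := by rw [hM]; ring
  -- the quotient is continuous, hence a.e. strongly measurable
  have hnumcont : Continuous fun ε : ℝ => ∫ v : ℝ, v ^ 2 * Real.exp (-(v - ε) ^ 2 / 2) := by
    have : (fun ε : ℝ => ∫ v : ℝ, v ^ 2 * Real.exp (-(v - ε) ^ 2 / 2))
        = fun ε : ℝ => C₂ + 2 * ε * C₁ + ε ^ 2 * C₀ := funext hnum
    rw [this]
    fun_prop
  have hdencont : Continuous fun ε : ℝ => ∫ v in Set.Icc (-L₀) L₀, Real.exp (-(v - ε) ^ 2 / 2) := by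
    apply continuous_of_dominated (bound := fun _ : ℝ => (1:ℝ))
    · intro ε
      exact (Continuous.aestronglyMeasurable (by fun_prop))
    · intro ε
      refine Filter.Eventually.of_forall fun v => ?_
      rw [Real.norm_of_nonneg (Real.exp_pos _).le]
      refine Real.exp_le_one_iff.2 ?_
      have := sq_nonneg (v - ε)
      linarith
    · exact integrableOn_const measure_Icc_lt_top.ne
    · exact Filter.Eventually.of_forall fun v => by fun_prop
  have hcontf : Continuous fun ε : ℝ =>
      (∫ v : ℝ, v ^ 2 * Real.exp (-(v - ε) ^ 2 / 2)) /
        (∫ v in Set.Icc (-L₀) L₀, Real.exp (-(v - ε) ^ 2 / 2)) :=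
    hnumcont.div hdencont fun ε => (hdenpos ε).ne'
  exact Integrable.mono' hgInt hcontf.aestronglyMeasurable
    (Filter.Eventually.of_forall hbound)
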